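/- In the generalized gadget H_k (k ≥ 1), suppose c is a coloring with values in {1,2,3} of all vertices a_1,...,a_{3k+1}, b_1,...,b_{3k+1} except that one designated vertex b_{3k+1} may take value 4, such that c is proper and every triangle {a_i,b_i,a_{i+1}} and {b_i,a_{i+1},b_{i+1}} whose vertices all have colors in {1,2,3} has the unique-maximum property. Then the colors of the triple (a_i, b_i, a_{i+1}) determine the colors of (a_{i+1}, b_{i+1}, a_{i+2}) by the cyclic shift (x,y,z) ↦ (z,x,y), for all i such that the relevant vertices avoid color 4; consequently no such coloring exists. -/

import Mathlib

/-- The maximum of three values is attained at exactly one of them. -/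
def UM3 (x y z : ℕ) : Prop :=
  (y < x ∧ z < x) ∨ (x < y ∧ z < y) ∨ (x < z ∧ y < z)

set_option maxHeartbeats 1000000 in
/-- In the generalized gadget `H k`, suppose all vertices get colors in `{1,2,3}` except
the designated vertex `b (3k)` (the last inner vertex), which may also get `4`; the
coloring is proper, and every triangle all of whose vertices have colors in `{1,2,3}`
has the unique-maximum property. Then the colors of `(a i, b i, a (i+1))` determine those
of `(a (i+1), b (i+1), a (i+2))` by the cyclic shift `(x,y,z) ↦ (z,x,y)` whenever the
relevant vertices avoid color `4`; consequently no such coloring exists. -/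
theorem stmt_11 (k : ℕ) (hk : 1 ≤ k) (a b : Fin (3 * k + 1) → ℕ)
    (ha : ∀ i, 1 ≤ a i ∧ a i ≤ 3)
    (hb : ∀ i, 1 ≤ b i ∧ b i ≤ 3 ∨ (i = (⟨3 * k, by omega⟩ : Fin (3 * k + 1)) ∧ 1 ≤ b i ∧ b i ≤ 4))
    (paa : ∀ i, a i ≠ a (i + 1)) (pbb : ∀ i, b i ≠ b (i + 1))
    (pab : ∀ i, a i ≠ b i) (pba : ∀ i, b i ≠ a (i + 1))
    (tri1 : ∀ i, a i ≤ 3 → b i ≤ 3 → a (i + 1) ≤ 3 → UM3 (a i) (b i) (a (i + 1)))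
    (tri2 : ∀ i, b i ≤ 3 → a (i + 1) ≤ 3 → b (i + 1) ≤ 3 →
      UM3 (b i) (a (i + 1)) (b (i + 1))) :
    (∀ i, a i ≤ 3 → b i ≤ 3 → a (i + 1) ≤ 3 → b (i + 1) ≤ 3 → a (i + 2) ≤ 3 →
      b (i + 1) = a i ∧ a (i + 2) = b i) ∧
    False := by
  have hone : ((1 : Fin (3 * k + 1)) : ℕ) = 1 := by
    rw [Fin.val_one']; exact Nat.mod_eq_of_lt (by omega)
  have h2eq : (2 : Fin (3 * k + 1)) = 1 + 1 := by
    apply Fin.ext; rw [Fin.val_add]; simp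
  have add1 : ∀ (m : ℕ) (hm : m < 3 * k + 1) (hm1 : m + 1 < 3 * k + 1),
      (⟨m, hm⟩ : Fin (3 * k + 1)) + 1 = ⟨m + 1, hm1⟩ := by
    intro m hm hm1
    apply Fin.ext
    rw [Fin.add_def]
    simp only [hone]
    exact Nat.mod_eq_of_lt hm1
  have add2 : ∀ (m : ℕ) (hm : m < 3 * k + 1) (hm2 : m + 2 < 3 * k + 1),
      (⟨m, hm⟩ : Fin (3 * k + 1)) + 2 = ⟨m + 2, hm2⟩ := by
    intro m hm hm2
    rw [h2eq, ← add_assoc, add1 m hm (by omega), add1 (m + 1) (by omega) hm2]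
  have hb1 : ∀ i, 1 ≤ b i := by
    intro i; rcases hb i with ⟨h, _⟩ | ⟨_, h, _⟩ <;> exact h
  have shift : ∀ i : Fin (3 * k + 1), b i ≤ 3 → b (i + 1) ≤ 3 →
      b (i + 1) = a i ∧ a (i + 2) = b i := by
    intro i h1 h2
    have e2 : i + 2 = (i + 1) + 1 := by
      rw [h2eq, add_assoc]
    have h3 := ha i
    have h4 := ha (i + 1)
    have h5 := ha (i + 2)
    have h6 := paa i
    have h7 := paa (i + 1)
    have h8 := pab i
    have h9 := pab (i + 1)
    have h10 := pba i
    have h11 := pba (i + 1)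
    have h12 := hb1 i
    have h13 := hb1 (i + 1)
    have h14 := pbb i
    rw [← e2] at h7 h11
    omega
  -- b i ≤ 3 for i.val < 3k
  have hble : ∀ (m : ℕ) (hm : m < 3 * k), b ⟨m, by omega⟩ ≤ 3 := by
    intro m hm
    rcases hb ⟨m, by omega⟩ with ⟨_, h⟩ | ⟨h, _⟩
    · exact h
    · exfalso; have := congrArg Fin.val h; simp at this; omega
  have step : ∀ (m : ℕ) (h3 : m + 3 ≤ 3 * k),
      a ⟨m + 3, by omega⟩ = a ⟨m, by omega⟩ := by
    intro m h3
    have s1 := shift ⟨m, by omega⟩ (hble m (by omega)) (by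
      rw [add1 m (by omega) (by omega)]; exact hble (m + 1) (by omega))
    have s2 := shift ⟨m + 1, by omega⟩ (hble (m + 1) (by omega)) (by
      rw [add1 (m + 1) (by omega) (by omega)]; exact hble (m + 2) (by omega))
    have s1' : b ⟨m + 1, by omega⟩ = a ⟨m, by omega⟩ :=
      (congrArg b (add1 m (by omega) (by omega))).symm.trans s1.1
    have s2' : a ⟨m + 3, by omega⟩ = b ⟨m + 1, by omega⟩ :=
      (congrArg a (add2 (m + 1) (by omega) (by omega))).symm.trans s2.2
    exact s2'.trans s1'
  have per : ∀ (j : ℕ) (h : 3 * j ≤ 3 * k),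
      a ⟨3 * j, by omega⟩ = a ⟨0, by omega⟩ := by
    intro j
    induction j with
    | zero => intro _; rfl
    | succ n ih =>
      intro h
      have e : (⟨3 * (n + 1), by omega⟩ : Fin (3 * k + 1)) = ⟨3 * n + 3, by omega⟩ := by
        apply Fin.ext; simp; omega
      exact (congrArg a e).trans ((step (3 * n) (by omega)).trans (ih (by omega)))
  have hlast : a ⟨3 * k, by omega⟩ = a ⟨0, by omega⟩ := per k le_rfl
  have hwrap : (⟨3 * k, by omega⟩ : Fin (3 * k + 1)) + 1 = ⟨0, by omega⟩ := by
    apply Fin.ext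
    rw [Fin.add_def]
    simp only [hone]
    exact Nat.mod_self _
  have hne := paa ⟨3 * k, by omega⟩
  exact ⟨fun i _ h2 _ h4 _ => shift i h2 h4,
    hne (hlast.trans (congrArg a hwrap).symm)⟩
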